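/- Let K be a linearly ordered compact space, i.e., a linear order that is compact in its order topology, and suppose there exists a quasi metric d on K that fragments K (that is, K is a fragmentable compact). Then K is almost totally disconnected: there exist a set Γ and a topological embedding f : K → [0,1]^Γ such that for every x ∈ K the set {γ ∈ Γ : f(x)(γ) ∉ {0,1}} is countable. -/

import Mathlib

universe u

open Set Topology

/-- A quasi metric: symmetric, nonnegative, vanishing exactly on the diagonal
(the triangle inequality may fail). -/
def IsQuasiMetric {K : Type u} (d : K → K → ℝ) : Prop :=
  (∀ x y, 0 ≤ d x y) ∧ (∀ x y, d x y = d y x) ∧ (∀ x y, d x y = 0 ↔ x = y)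

/-- `d` fragments `K`: every nonempty closed set has a relatively open nonempty
subset of `d`-diameter less than any prescribed `ε > 0`. -/
def Fragments {K : Type u} [TopologicalSpace K] (d : K → K → ℝ) : Prop :=
  ∀ L : Set K, L.Nonempty → IsClosed L → ∀ ε : ℝ, 0 < ε →
    ∃ U : Set K, IsOpen U ∧ (U ∩ L).Nonempty ∧
      ∀ x ∈ U ∩ L, ∀ y ∈ U ∩ L, d x y < ε

/-- `K` is almost totally disconnected: it embeds into `[0,1]^Γ` so that every
point has all but countably many coordinates in `{0,1}`. -/
def AlmostTotallyDisconnected (K : Type u) [TopologicalSpace K] : Prop :=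
  ∃ (Γ : Type u) (f : K → Γ → ℝ),
    Topology.IsEmbedding f ∧
    (∀ x γ, f x γ ∈ Set.Icc (0:ℝ) 1) ∧
    (∀ x : K, {γ : Γ | f x γ ∉ ({0, 1} : Set ℝ)}.Countable)

section ATDAux

variable {K : Type u} [LinearOrder K] [TopologicalSpace K] [OrderTopology K] [CompactSpace K]

/-- In a compact linearly ordered space, every nonempty set has a greatest lower bound. -/
lemma ATD_exists_isGLB (S : Set K) (hS : S.Nonempty) : ∃ a, IsGLB S a := by
  obtain ⟨a, ha⟩ := (isClosed_closure ).isCompact.exists_isLeast hS.closure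
  refine ⟨a, fun s hs => ha.2 (subset_closure hs), ?_⟩
  intro b hb
  have hsub : S ⊆ Ici b := fun s hs => hb hs
  exact closure_minimal hsub isClosed_Ici ha.1

lemma ATD_exists_isLUB (S : Set K) (hS : S.Nonempty) : ∃ a, IsLUB S a := by
  obtain ⟨a, ha⟩ := (isClosed_closure ).isCompact.exists_isGreatest hS.closure
  refine ⟨a, fun s hs => ha.2 (subset_closure hs), ?_⟩
  intro b hb
  have hsub : S ⊆ Iic b := fun s hs => hb hs
  exact closure_minimal hsub isClosed_Iic ha.1

/-- Monotone Urysohn lemma in a compact ordered space. -/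
lemma ATD_exists_mury (a b : K) (hab : a < b) :
    ∃ g : K → ℝ, Continuous g ∧ Monotone g ∧ (∀ z, g z ∈ Icc (0:ℝ) 1) ∧
      (∀ z, z ≤ a → g z = 0) ∧ (∀ z, b ≤ z → g z = 1) := by
  obtain ⟨f, hf0, hf1, hf01⟩ := exists_continuous_zero_one_of_isClosed
    (isClosed_Iic (a := a)) (isClosed_Ici (a := b)) (Iic_disjoint_Ici.mpr hab.not_ge)
  set g : K → ℝ := fun x => sSup (⇑f '' Iic x) with hgdef
  have hne : ∀ x : K, (⇑f '' Iic x).Nonempty := fun x => ⟨f x, x, self_mem_Iic, rfl⟩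
  have hbdd : ∀ x : K, BddAbove (⇑f '' Iic x) := by
    intro x
    refine ⟨1, ?_⟩
    rintro v ⟨z, _, rfl⟩
    exact (hf01 z).2
  have hfg : ∀ x : K, f x ≤ g x := fun x => le_csSup (hbdd x) ⟨x, self_mem_Iic, rfl⟩
  have hmono : Monotone g := by
    intro u v huv
    exact csSup_le_csSup (hbdd v) (hne u) (image_mono (Iic_subset_Iic.2 huv))
  have hg0 : ∀ z, z ≤ a → g z = 0 := by
    intro z hz
    apply le_antisymm
    · apply csSup_le (hne z)
      rintro v ⟨w, hw, rfl⟩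
      exact le_of_eq (hf0 (le_trans hw hz : w ∈ Iic a))
    · calc (0:ℝ) = f z := (hf0 (hz : z ∈ Iic a)).symm
        _ ≤ g z := hfg z
  have hg1 : ∀ z, b ≤ z → g z = 1 := by
    intro z hz
    apply le_antisymm
    · apply csSup_le (hne z)
      rintro v ⟨w, _, rfl⟩
      exact (hf01 w).2
    · calc (1:ℝ) = f b := (hf1 (le_refl b : b ∈ Ici b)).symm
        _ ≤ g z := le_csSup (hbdd z) ⟨b, hz, rfl⟩
  have hIcc : ∀ z, g z ∈ Icc (0:ℝ) 1 := by
    intro z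
    constructor
    · exact le_trans (hf01 z).1 (hfg z)
    · apply csSup_le (hne z)
      rintro v ⟨w, _, rfl⟩
      exact (hf01 w).2
  have hcont : Continuous g := by
    rw [continuous_iff_continuousAt]
    intro x
    have : Filter.Tendsto g (𝓝 x) (𝓝 (g x)) := by
      apply tendsto_order.2
      constructor
      · intro r hr
        obtain ⟨v, ⟨z, hzx, rfl⟩, hrv⟩ := exists_lt_of_lt_csSup (hne x) hr
        rcases (hzx : z ≤ x).lt_or_eq with hzx' | rfl
        · refine Filter.eventually_of_mem ((isOpen_Ioi).mem_nhds hzx') ?_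
          intro w hw
          exact lt_of_lt_of_le hrv (le_csSup (hbdd w) ⟨z, le_of_lt hw, rfl⟩)
        · have hxmem : z ∈ ⇑f ⁻¹' Ioi r := hrv
          refine Filter.eventually_of_mem
            ((f.continuous.isOpen_preimage _ isOpen_Ioi).mem_nhds hxmem) ?_
          intro w hw
          exact lt_of_lt_of_le hw (hfg w)
      · intro r hr
        by_cases hex : ∃ x', x < x' ∧ g x' < r
        · obtain ⟨x', hxx', hgx'⟩ := hex
          refine Filter.eventually_of_mem ((isOpen_Iio).mem_nhds hxx') ?_
          intro w hw
          exact lt_of_le_of_lt (hmono (le_of_lt hw)) hgx'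
        · push_neg at hex
          by_cases htop : ∃ x', x < x'
          · have hjump : ∃ v, x < v ∧ Ioo x v = ∅ := by
              by_contra hno
              push_neg at hno
              set c := (g x + r)/2 with hcdef
              have hc1 : g x < c := by
                rw [hcdef]; linarith
              have hc2 : c < r := by
                rw [hcdef]; linarith
              have hxW : x ∈ ⇑f ⁻¹' Iio c := by
                simp only [mem_preimage, mem_Iio]
                exact lt_of_le_of_lt (hfg x) hc1
              obtain ⟨u', hu', hIco⟩ := exists_Ico_subset_of_mem_nhds
                ((f.continuous.isOpen_preimage _ isOpen_Iio).mem_nhds hxW) htop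
              obtain ⟨x₁, hx₁⟩ := hno u' hu' 
              have hgb : g x₁ ≤ c := by
                apply csSup_le (hne x₁)
                rintro v ⟨z, hz, rfl⟩
                rcases le_total z x with h | h
                · exact le_trans (le_csSup (hbdd x) ⟨z, h, rfl⟩) hc1.le
                · exact (hIco ⟨h, lt_of_le_of_lt hz hx₁.2⟩ : f z < c).le
              exact absurd (lt_of_le_of_lt hgb hc2) (not_lt.2 (hex x₁ hx₁.1))
            obtain ⟨v, hxv, hvempty⟩ := hjump
            have hIic : Iic x = Iio v := by
              ext w
              simp only [mem_Iic, mem_Iio]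
              constructor
              · exact fun h => lt_of_le_of_lt h hxv
              · intro h
                by_contra hxw
                push_neg at hxw
                have : w ∈ Ioo x v := ⟨hxw, h⟩
                rw [hvempty] at this
                exact this
            have hmem : Iic x ∈ 𝓝 x := by
              rw [hIic]
              exact (isOpen_Iio).mem_nhds (by simpa using hxv)
            refine Filter.eventually_of_mem hmem ?_
            intro w hw
            exact lt_of_le_of_lt (hmono hw) hr
          · push_neg at htop
            refine Filter.eventually_of_mem Filter.univ_mem ?_
            intro w _
            exact lt_of_le_of_lt (hmono (htop w)) hr
    exact this
  exact ⟨g, hcont, hmono, hIcc, hg0, hg1⟩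

lemma ATD_exists_ordConnected_mem_nhds {s : Set K} (hs : IsOpen s) {w : K} (hw : w ∈ s) :
    ∃ t : Set K, t ∈ 𝓝 w ∧ t ⊆ s ∧ t.OrdConnected := by
  by_cases hb : ∃ l, l < w
  · obtain ⟨l, hl, hIoc⟩ := exists_Ioc_subset_of_mem_nhds (hs.mem_nhds hw) hb
    by_cases ha : ∃ u, w < u
    · obtain ⟨u, hu, hIco⟩ := exists_Ico_subset_of_mem_nhds (hs.mem_nhds hw) ha
      refine ⟨Ioo l u, (isOpen_Ioo).mem_nhds ⟨hl, hu⟩, ?_, ordConnected_Ioo⟩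
      intro z hz
      rcases le_total z w with h | h
      · exact hIoc ⟨hz.1, h⟩
      · exact hIco ⟨h, hz.2⟩
    · push_neg at ha
      refine ⟨Ioi l, (isOpen_Ioi).mem_nhds hl, ?_, ordConnected_Ioi⟩
      exact fun z hz => hIoc ⟨hz, ha z⟩
  · push_neg at hb
    by_cases ha : ∃ u, w < u
    · obtain ⟨u, hu, hIco⟩ := exists_Ico_subset_of_mem_nhds (hs.mem_nhds hw) ha
      exact ⟨Iio u, (isOpen_Iio).mem_nhds hu, fun z hz => hIco ⟨hb z, hz⟩, ordConnected_Iio⟩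
    · push_neg at ha
      refine ⟨univ, Filter.univ_mem, fun z _ => ?_, ordConnected_univ⟩
      have : z = w := le_antisymm (ha z) (hb z)
      rwa [this]

lemma ATD_ordConnected_component {s : Set K} {z : K} :
    (s.ordConnectedComponent z).OrdConnected := by
  constructor
  intro a ha b hb c hc
  rw [Set.mem_ordConnectedComponent] at ha hb ⊢
  have h1 : uIcc z c ⊆ uIcc z a ∪ uIcc a c := uIcc_subset_uIcc_union_uIcc
  have h2 : uIcc a c ⊆ uIcc a b := uIcc_subset_uIcc left_mem_uIcc (Icc_subset_uIcc hc)
  have h3 : uIcc a b ⊆ uIcc a z ∪ uIcc z b := uIcc_subset_uIcc_union_uIcc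
  have h4 : uIcc a z ⊆ s := by rw [uIcc_comm]; exact ha
  intro w hw
  rcases h1 hw with h | h
  · exact ha h
  · rcases h3 (h2 h) with h' | h'
    · exact h4 h'
    · exact hb h'

lemma ATD_isOpen_ordConnectedComponent {s : Set K} (hs : IsOpen s) {z : K} :
    IsOpen (s.ordConnectedComponent z) := by
  rw [isOpen_iff_mem_nhds]
  intro w hw
  have hws : w ∈ s := Set.ordConnectedComponent_subset hw
  obtain ⟨t, htn, hts, htoc⟩ := ATD_exists_ordConnected_mem_nhds hs hws
  refine Filter.mem_of_superset htn ?_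
  intro w' hw'
  rw [Set.mem_ordConnectedComponent]
  intro c hc
  rcases (uIcc_subset_uIcc_union_uIcc : uIcc z w' ⊆ uIcc z w ∪ uIcc w w') hc with h | h
  · exact Set.mem_ordConnectedComponent.1 hw h
  · exact hts (htoc.uIcc_subset (mem_of_mem_nhds htn) hw' h)

variable (d : K → K → ℝ)

/-- There is a `d`-small nonempty open order-convex subset of any nonempty open interval. -/
lemma ATD_exists_small_convex (hfrag : Fragments d) {ε : ℝ} (hε : 0 < ε) {x y : K}
    (hne : (Ioo x y).Nonempty) :
    ∃ V : Set K, V.Nonempty ∧ IsOpen V ∧ V.OrdConnected ∧ V ⊆ Ioo x y ∧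
      ∀ u ∈ V, ∀ w ∈ V, d u w < ε := by
  obtain ⟨U, hUopen, ⟨w, hwU, hwL⟩, hUsmall⟩ :=
    hfrag (closure (Ioo x y)) hne.closure isClosed_closure ε hε
  obtain ⟨z, hzU, hzI⟩ := mem_closure_iff.1 hwL U hUopen hwU
  set W0 : Set K := U ∩ Ioo x y with hW0def
  have hW0open : IsOpen W0 := hUopen.inter isOpen_Ioo
  set V := W0.ordConnectedComponent z with hVdef
  have hsub : V ⊆ W0 := Set.ordConnectedComponent_subset
  have hzV : z ∈ V := Set.self_mem_ordConnectedComponent.2 (⟨hzU, hzI⟩ : z ∈ W0)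
  refine ⟨V, ⟨z, hzV⟩, ATD_isOpen_ordConnectedComponent hW0open, ATD_ordConnected_component,
    hsub.trans inter_subset_right, ?_⟩
  intro u hu v hv
  exact hUsmall u ⟨(hsub hu).1, subset_closure (hsub hu).2⟩
    v ⟨(hsub hv).1, subset_closure (hsub hv).2⟩

/-- The collections of disjoint small open convex sets. -/
def ATDGood (ε : ℝ) (𝒞 : Set (Set K)) : Prop :=
  (∀ V ∈ 𝒞, V.Nonempty ∧ IsOpen V ∧ V.OrdConnected ∧ ∀ u ∈ V, ∀ w ∈ V, d u w < ε) ∧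
    𝒞.PairwiseDisjoint id

/-- Families of disjoint closed-open intervals with endpoints in `V`. -/
def ATDGoodF (V : Set K) (F : Set (K × K)) : Prop :=
  (∀ M ∈ F, M.1 ∈ V ∧ M.2 ∈ V ∧ M.1 < M.2) ∧
    F.PairwiseDisjoint (fun M => Ioc M.1 M.2)

lemma ATD_exists_maximal_good (ε : ℝ) : ∃ 𝒞, Maximal (ATDGood d ε) 𝒞 := by
  apply zorn_subset
  intro c hc hchain
  refine ⟨⋃₀ c, ⟨?_, ?_⟩, fun s hs => subset_sUnion_of_mem hs⟩
  · rintro V ⟨𝒞, h𝒞c, hV⟩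
    exact (hc h𝒞c).1 V hV
  · intro V hV W hW hne
    obtain ⟨𝒞₁, h1c, hV1⟩ := hV
    obtain ⟨𝒞₂, h2c, hW2⟩ := hW
    rcases hchain.total h1c h2c with h | h
    · exact (hc h2c).2 (h hV1) hW2 hne
    · exact (hc h1c).2 hV1 (h hW2) hne

lemma ATD_exists_maximal_goodF (V : Set K) : ∃ F, Maximal (ATDGoodF V) F := by
  apply zorn_subset
  intro c hc hchain
  refine ⟨⋃₀ c, ⟨?_, ?_⟩, fun s hs => subset_sUnion_of_mem hs⟩
  · rintro M ⟨F, hFc, hM⟩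
    exact (hc hFc).1 M hM
  · intro M hM W hW hne
    obtain ⟨F₁, h1c, hM1⟩ := hM
    obtain ⟨F₂, h2c, hW2⟩ := hW
    rcases hchain.total h1c h2c with h | h
    · exact (hc h2c).2 (h hM1) hW2 hne
    · exact (hc h1c).2 hM1 (h hW2) hne

lemma ATD_maximal_good_meets (hfrag : Fragments d) {ε : ℝ} (hε : 0 < ε) {𝒞 : Set (Set K)}
    (hmax : Maximal (ATDGood d ε) 𝒞) {x y : K} (hne : (Ioo x y).Nonempty) :
    ∃ V ∈ 𝒞, ∃ q ∈ V, q ∈ Ioo x y := by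
  by_contra hno
  push_neg at hno
  obtain ⟨W, hWne, hWopen, hWoc, hWsub, hWsmall⟩ := ATD_exists_small_convex d hfrag hε hne
  have hgood : ATDGood d ε (insert W 𝒞) := by
    constructor
    · rintro V (rfl | hV)
      · exact ⟨hWne, hWopen, hWoc, hWsmall⟩
      · exact hmax.1.1 V hV
    · refine hmax.1.2.insert ?_
      intro V hV _
      rw [Set.disjoint_left]
      intro z hzW hzV
      exact hno V hV z hzV (hWsub hzW)
  have hsub2 : insert W 𝒞 ⊆ 𝒞 := hmax.2 hgood (subset_insert _ _)
  have hW𝒞 : W ∈ 𝒞 := hsub2 (mem_insert _ _)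
  obtain ⟨w, hw⟩ := hWne
  exact hno W hW𝒞 w hw (hWsub hw)

end ATDAux

/-- Every linearly ordered fragmentable compact space is almost totally disconnected. -/
theorem linearly_ordered_fragmentable_is_almost_totally_disconnected
    {K : Type u} [LinearOrder K] [TopologicalSpace K] [OrderTopology K] [CompactSpace K]
    (d : K → K → ℝ) (hd : IsQuasiMetric d) (hfrag : Fragments d) :
    AlmostTotallyDisconnected K := by
  classical
  obtain ⟨dpos, _dsymm, deq⟩ := hd
  -- choose monotone Urysohn functions for all pairs
  have hU : ∀ p : K × K, ∃ g : K → ℝ, p.1 < p.2 →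
      Continuous g ∧ Monotone g ∧ (∀ z, g z ∈ Icc (0:ℝ) 1) ∧
      (∀ z, z ≤ p.1 → g z = 0) ∧ (∀ z, p.2 ≤ z → g z = 1) := by
    intro p
    by_cases h : p.1 < p.2
    · obtain ⟨g, hg⟩ := ATD_exists_mury p.1 p.2 h
      exact ⟨g, fun _ => hg⟩
    · exact ⟨fun _ => 0, fun hc => absurd hc h⟩
  choose hFn hFnSpec using hU
  -- maximal families of disjoint small convex open sets, for each scale
  choose 𝒞 h𝒞 using fun m : ℕ => ATD_exists_maximal_good d (1/((m:ℝ)+1))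
  -- maximal disjoint interval families inside each convex set
  choose F hFmax using fun V : Set K => ATD_exists_maximal_goodF (K := K) V
  -- the coordinate family
  set ℋ : Set (K → ℝ) := {h | ∃ u v : K, u < v ∧ h = hFn (u, v) ∧
      (Ioo u v = ∅ ∨ ∃ m : ℕ, ∃ V ∈ 𝒞 m, (u, v) ∈ F V)} with hℋdef
  have hmem_cont : ∀ h ∈ ℋ, Continuous h := by
    rintro h ⟨u, v, huv, rfl, -⟩
    exact (hFnSpec (u, v) huv).1
  have hmem_mono : ∀ h ∈ ℋ, Monotone h := by
    rintro h ⟨u, v, huv, rfl, -⟩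
    exact (hFnSpec (u, v) huv).2.1
  have hmem_Icc : ∀ h ∈ ℋ, ∀ z, h z ∈ Icc (0:ℝ) 1 := by
    rintro h ⟨u, v, huv, rfl, -⟩
    exact (hFnSpec (u, v) huv).2.2.1
  -- separation
  have hsep : ∀ x y : K, x < y → ∃ h ∈ ℋ, h x < h y := by
    intro x y hxy
    by_cases hjump : ∃ u v : K, x ≤ u ∧ u < v ∧ v ≤ y ∧ Ioo u v = ∅
    · obtain ⟨u, v, hxu, huv, hvy, hempty⟩ := hjump
      refine ⟨hFn (u, v), ⟨u, v, huv, rfl, Or.inl hempty⟩, ?_⟩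
      have hs := hFnSpec (u, v) huv
      have h0 : hFn (u, v) x = 0 := hs.2.2.2.1 x hxu
      have h1 : hFn (u, v) y = 1 := hs.2.2.2.2 y hvy
      rw [h0, h1]
      norm_num
    · have hDense : ∀ u v : K, x ≤ u → u < v → v ≤ y → (Ioo u v).Nonempty := by
        intro u v h1 h2 h3
        rw [nonempty_iff_ne_empty]
        intro hemp
        exact hjump ⟨u, v, h1, h2, h3, hemp⟩
      by_contra hbad
      have hcontra : ∀ h ∈ ℋ, ∀ u v : K, x ≤ u → v ≤ y → h u < h v → False := by
        intro h hh u v hxu hvy hlt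
        have hm := hmem_mono h hh
        exact hbad ⟨h, hh, lt_of_le_of_lt (hm hxu) (lt_of_lt_of_le hlt (hm hvy))⟩
      have hIooxy : (Ioo x y).Nonempty := hDense x y le_rfl hxy le_rfl
      have hmemH : ∀ m : ℕ, ∀ V ∈ 𝒞 m, ∀ M ∈ F V, hFn M ∈ ℋ := by
        intro m V hV M hM
        have hlt := ((hFmax V).1.1 M hM).2.2
        exact ⟨M.1, M.2, hlt, by rw [Prod.mk.eta], Or.inr ⟨m, V, hV, by rw [Prod.mk.eta]; exact hM⟩⟩
      have hmember_contra : ∀ m : ℕ, ∀ V ∈ 𝒞 m, ∀ M ∈ F V, x ≤ M.1 → M.2 ≤ y → False := by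
        intro m V hV M hM hx1 hy2
        have hlt := ((hFmax V).1.1 M hM).2.2
        have hs := hFnSpec M hlt
        refine hcontra (hFn M) (hmemH m V hV M hM) M.1 M.2 hx1 hy2 ?_
        have e0 : hFn M M.1 = 0 := hs.2.2.2.1 M.1 le_rfl
        have e1 : hFn M M.2 = 1 := hs.2.2.2.2 M.2 le_rfl
        rw [e0, e1]
        norm_num
      have hext : ∀ V : Set K, ∀ u' p' : K, u' ∈ V → p' ∈ V → u' < p' →
          (∀ M ∈ F V, Disjoint (Ioc M.1 M.2) (Ioc u' p')) → (u', p') ∈ F V := by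
        intro V u' p' hu' hp' hup hdisj
        have hgood : ATDGoodF V (insert (u', p') (F V)) := by
          constructor
          · rintro M (rfl | hM)
            · exact ⟨hu', hp', hup⟩
            · exact (hFmax V).1.1 M hM
          · refine (hFmax V).1.2.insert ?_
            intro M hM _
            exact (hdisj M hM).symm
        exact (hFmax V).2 hgood (subset_insert _ _) (mem_insert _ _)
      have hlevel : ∀ m : ℕ, ∀ u ∈ Ioo x y, ∀ w ∈ Ioo x y, d u w < 1/((m:ℝ)+1) := by
        intro m
        have hepos : (0:ℝ) < 1/((m:ℝ)+1) := by positivity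
        obtain ⟨V, hVmem, q, hqV, hqIoo⟩ := ATD_maximal_good_meets d hfrag hepos (h𝒞 m) hIooxy
        obtain ⟨hVne, hVopen, hVoc, hVsmall⟩ := (h𝒞 m).1.1 V hVmem
        have hmemV : ∀ M ∈ F V, M.1 ∈ V ∧ M.2 ∈ V ∧ M.1 < M.2 := (hFmax V).1.1
        have hdisjF := (hFmax V).1.2
        by_cases hQ : ∃ v ∈ V, y ≤ v
        · by_cases hP : ∃ v ∈ V, v ≤ x
          · obtain ⟨vP, hvP, hvPx⟩ := hP
            obtain ⟨vQ, hvQ, hyvQ⟩ := hQ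
            intro u hu w hw
            have hsubV : Ioo x y ⊆ V := by
              intro z hz
              exact hVoc.out hvP hvQ ⟨le_trans hvPx hz.1.le, le_trans hz.2.le hyvQ⟩
            exact hVsmall u (hsubV hu) w (hsubV hw)
          · exfalso
            push_neg at hP
            obtain ⟨vQ, hvQ, hyvQ⟩ := hQ
            obtain ⟨α, hα⟩ := ATD_exists_isGLB V hVne
            have hxα : x ≤ α := hα.2 (fun v hv => (hP v hv).le)
            have hαq : α ≤ q := hα.1 hqV
            have hαy : α < y := lt_of_le_of_lt hαq hqIoo.2
            have hIooαy : Ioo α y ⊆ V := by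
              intro z hz
              obtain ⟨v, hvV, hvz⟩ : ∃ v ∈ V, v < z := by
                by_contra hno2
                push_neg at hno2
                exact absurd (hα.2 hno2) (not_le.2 hz.1)
              exact hVoc.out hvV hvQ ⟨hvz.le, le_trans hz.2.le hyvQ⟩
            have hαnV : α ∉ V := by
              intro hαV
              have hxαlt : x < α := hP α hαV
              obtain ⟨l, hl, hIoc⟩ := exists_Ioc_subset_of_mem_nhds (hVopen.mem_nhds hαV) ⟨x, hxαlt⟩
              obtain ⟨w, hw⟩ := hDense (max l x) α (le_max_right l x) (max_lt hl hxαlt) hαy.le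
              have hwV : w ∈ V := hIoc ⟨lt_of_le_of_lt (le_max_left l x) hw.1, hw.2.le⟩
              exact absurd (hα.1 hwV) (not_le.2 hw.2)
            have hu_gt : ∀ M ∈ F V, α < M.1 := by
              intro M hM
              refine lt_of_le_of_ne (hα.1 (hmemV M hM).1) ?_
              intro he
              exact hαnV (he ▸ (hmemV M hM).1)
            by_cases hB1 : ∃ M ∈ F V, (Ioc M.1 M.2 ∩ Ioo α y).Nonempty ∧ M.2 ≤ y
            · obtain ⟨M, hM, -, hM2y⟩ := hB1
              exact hmember_contra m V hVmem M hM (hxα.trans (hu_gt M hM).le) hM2y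
            · by_cases hB0 : ∃ M ∈ F V, (Ioc M.1 M.2 ∩ Ioo α y).Nonempty
              · obtain ⟨S, hS, e, heS, heI⟩ := hB0
                have hSy : y < S.2 := by
                  by_contra hle
                  push_neg at hle
                  exact hB1 ⟨S, hS, ⟨e, heS, heI⟩, hle⟩
                have hαS1 : α < S.1 := hu_gt S hS
                have hS1y : S.1 < y := lt_trans heS.1 heI.2
                have hnomeet : ∀ M ∈ F V, ∀ z ∈ Ioc M.1 M.2, z ∉ Ioo α S.1 := by
                  intro W hW e' he'W he'I
                  have hWS : W ≠ S := by
                    rintro rfl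
                    exact absurd he'W.1 (not_lt.2 he'I.2.le)
                  have hWy : y < W.2 := by
                    by_contra hle
                    push_neg at hle
                    exact hB1 ⟨W, hW, ⟨e', he'W, ⟨he'I.1, lt_trans he'I.2 hS1y⟩⟩, hle⟩
                  obtain ⟨w2, hw2⟩ := hDense S.1 y (hxα.trans hαS1.le) hS1y le_rfl
                  have hw2W : w2 ∈ Ioc W.1 W.2 :=
                    ⟨lt_trans (lt_trans he'W.1 he'I.2) hw2.1, (lt_trans hw2.2 hWy).le⟩
                  have hw2S : w2 ∈ Ioc S.1 S.2 := ⟨hw2.1, (lt_trans hw2.2 hSy).le⟩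
                  exact Set.disjoint_left.1 (hdisjF hW hS hWS) hw2W hw2S
                obtain ⟨w1, hw1⟩ := hDense α S.1 hxα hαS1 hS1y.le
                obtain ⟨u', hu'⟩ := hDense α w1 hxα hw1.1 (lt_trans hw1.2 hS1y).le
                obtain ⟨p', hp'⟩ := hDense u' w1 (hxα.trans hu'.1.le) hu'.2 (lt_trans hw1.2 hS1y).le
                have hu'V : u' ∈ V := hIooαy ⟨hu'.1, lt_trans (lt_trans hu'.2 hw1.2) hS1y⟩
                have hp'V : p' ∈ V :=
                  hIooαy ⟨lt_trans hu'.1 hp'.1, lt_trans (lt_trans hp'.2 hw1.2) hS1y⟩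
                have hint : ∀ z ∈ Ioc u' p', z ∈ Ioo α S.1 := by
                  intro z hz
                  exact ⟨lt_trans hu'.1 hz.1, lt_of_le_of_lt hz.2 (lt_trans hp'.2 hw1.2)⟩
                have hmemF : (u', p') ∈ F V := by
                  refine hext V u' p' hu'V hp'V hp'.1 ?_
                  intro M hM
                  rw [Set.disjoint_right]
                  intro z hz hzM
                  exact hnomeet M hM z hzM (hint z hz)
                exact hnomeet (u', p') hmemF p' ⟨hp'.1, le_rfl⟩ (hint p' ⟨hp'.1, le_rfl⟩)
              · obtain ⟨w1, hw1⟩ := hDense α y hxα hαy le_rfl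
                obtain ⟨u', hu'⟩ := hDense α w1 hxα hw1.1 hw1.2.le
                obtain ⟨p', hp'⟩ := hDense u' w1 (hxα.trans hu'.1.le) hu'.2 hw1.2.le
                have hu'V : u' ∈ V := hIooαy ⟨hu'.1, lt_trans hu'.2 hw1.2⟩
                have hp'V : p' ∈ V := hIooαy ⟨lt_trans hu'.1 hp'.1, lt_trans hp'.2 hw1.2⟩
                have hint : ∀ z ∈ Ioc u' p', z ∈ Ioo α y := by
                  intro z hz
                  exact ⟨lt_trans hu'.1 hz.1, lt_of_le_of_lt hz.2 (lt_trans hp'.2 hw1.2)⟩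
                have hmemF : (u', p') ∈ F V := by
                  refine hext V u' p' hu'V hp'V hp'.1 ?_
                  intro M hM
                  rw [Set.disjoint_right]
                  intro z hz hzM
                  exact hB0 ⟨M, hM, z, hzM, hint z hz⟩
                exact hB0 ⟨(u', p'), hmemF, p', ⟨hp'.1, le_rfl⟩, hint p' ⟨hp'.1, le_rfl⟩⟩
        · by_cases hP : ∃ v ∈ V, v ≤ x
          · exfalso
            push_neg at hQ
            obtain ⟨vP, hvP, hvPx⟩ := hP
            obtain ⟨β, hβ⟩ := ATD_exists_isLUB V hVne
            have hβy : β ≤ y := hβ.2 (fun v hv => (hQ v hv).le)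
            have hqβ : q ≤ β := hβ.1 hqV
            have hxβ : x < β := lt_of_lt_of_le hqIoo.1 hqβ
            have hIooxβ : Ioo x β ⊆ V := by
              intro z hz
              obtain ⟨v, hvV, hzv⟩ : ∃ v ∈ V, z < v := by
                by_contra hno2
                push_neg at hno2
                exact absurd (hβ.2 hno2) (not_le.2 hz.2)
              exact hVoc.out hvP hvV ⟨le_trans hvPx hz.1.le, hzv.le⟩
            have hβnV : β ∉ V := by
              intro hβV
              have hβylt : β < y := hQ β hβV
              obtain ⟨r, hr, hIco⟩ := exists_Ico_subset_of_mem_nhds (hVopen.mem_nhds hβV) ⟨y, hβylt⟩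
              obtain ⟨w, hw⟩ := hDense β (min r y) hxβ.le (lt_min hr hβylt) (min_le_right r y)
              have hwV : w ∈ V := hIco ⟨hw.1.le, lt_of_lt_of_le hw.2 (min_le_left r y)⟩
              exact absurd (hβ.1 hwV) (not_le.2 hw.1)
            have hp_lt : ∀ M ∈ F V, M.2 < β := by
              intro M hM
              refine lt_of_le_of_ne (hβ.1 (hmemV M hM).2.1) ?_
              intro he
              exact hβnV (he ▸ (hmemV M hM).2.1)
            by_cases hC1 : ∃ M ∈ F V, (Ioc M.1 M.2 ∩ Ioo x β).Nonempty ∧ x ≤ M.1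
            · obtain ⟨M, hM, -, hxM1⟩ := hC1
              exact hmember_contra m V hVmem M hM hxM1 ((hp_lt M hM).le.trans hβy)
            · by_cases hC0 : ∃ M ∈ F V, (Ioc M.1 M.2 ∩ Ioo x β).Nonempty
              · obtain ⟨S, hS, e, heS, heI⟩ := hC0
                have hS1x : S.1 < x := by
                  by_contra hle
                  push_neg at hle
                  exact hC1 ⟨S, hS, ⟨e, heS, heI⟩, hle⟩
                have hxS2 : x < S.2 := lt_of_lt_of_le heI.1 heS.2
                have hS2β : S.2 < β := hp_lt S hS
                have hnomeet : ∀ M ∈ F V, ∀ z ∈ Ioc M.1 M.2, z ∉ Ioo S.2 β := by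
                  intro W hW e' he'W he'I
                  have hWS : W ≠ S := by
                    rintro rfl
                    exact absurd he'W.2 (not_le.2 he'I.1)
                  have hWx : W.1 < x := by
                    by_contra hle
                    push_neg at hle
                    exact hC1 ⟨W, hW, ⟨e', he'W, ⟨lt_trans hxS2 he'I.1, he'I.2⟩⟩, hle⟩
                  obtain ⟨w2, hw2⟩ := hDense x S.2 le_rfl hxS2 (hS2β.le.trans hβy)
                  have hw2W : w2 ∈ Ioc W.1 W.2 :=
                    ⟨lt_trans hWx hw2.1, (lt_trans hw2.2 he'I.1).le.trans he'W.2⟩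
                  have hw2S : w2 ∈ Ioc S.1 S.2 := ⟨lt_trans hS1x hw2.1, hw2.2.le⟩
                  exact Set.disjoint_left.1 (hdisjF hW hS hWS) hw2W hw2S
                obtain ⟨w1, hw1⟩ := hDense S.2 β hxS2.le hS2β hβy
                obtain ⟨u', hu'⟩ := hDense S.2 w1 hxS2.le hw1.1 (hw1.2.le.trans hβy)
                obtain ⟨p', hp'⟩ := hDense u' w1 (hxS2.le.trans hu'.1.le) hu'.2 (hw1.2.le.trans hβy)
                have hu'V : u' ∈ V := hIooxβ ⟨lt_trans hxS2 hu'.1, lt_trans hu'.2 hw1.2⟩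
                have hp'V : p' ∈ V :=
                  hIooxβ ⟨lt_trans (lt_trans hxS2 hu'.1) hp'.1, lt_trans hp'.2 hw1.2⟩
                have hint : ∀ z ∈ Ioc u' p', z ∈ Ioo S.2 β := by
                  intro z hz
                  exact ⟨lt_trans hu'.1 hz.1, lt_of_le_of_lt hz.2 (lt_trans hp'.2 hw1.2)⟩
                have hmemF : (u', p') ∈ F V := by
                  refine hext V u' p' hu'V hp'V hp'.1 ?_
                  intro M hM
                  rw [Set.disjoint_right]
                  intro z hz hzM
                  exact hnomeet M hM z hzM (hint z hz)
                exact hnomeet (u', p') hmemF p' ⟨hp'.1, le_rfl⟩ (hint p' ⟨hp'.1, le_rfl⟩)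
              · obtain ⟨w1, hw1⟩ := hDense x β le_rfl hxβ hβy
                obtain ⟨u', hu'⟩ := hDense x w1 le_rfl hw1.1 (hw1.2.le.trans hβy)
                obtain ⟨p', hp'⟩ := hDense u' w1 hu'.1.le hu'.2 (hw1.2.le.trans hβy)
                have hu'V : u' ∈ V := hIooxβ ⟨hu'.1, lt_trans hu'.2 hw1.2⟩
                have hp'V : p' ∈ V := hIooxβ ⟨lt_trans hu'.1 hp'.1, lt_trans hp'.2 hw1.2⟩
                have hint : ∀ z ∈ Ioc u' p', z ∈ Ioo x β := by
                  intro z hz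
                  exact ⟨lt_trans hu'.1 hz.1, lt_of_le_of_lt hz.2 (lt_trans hp'.2 hw1.2)⟩
                have hmemF : (u', p') ∈ F V := by
                  refine hext V u' p' hu'V hp'V hp'.1 ?_
                  intro M hM
                  rw [Set.disjoint_right]
                  intro z hz hzM
                  exact hC0 ⟨M, hM, z, hzM, hint z hz⟩
                exact hC0 ⟨(u', p'), hmemF, p', ⟨hp'.1, le_rfl⟩, hint p' ⟨hp'.1, le_rfl⟩⟩
          · exfalso
            push_neg at hP
            push_neg at hQ
            have hVsub : V ⊆ Ioo x y := fun v hv => ⟨hP v hv, hQ v hv⟩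
            by_cases hFe : ∃ M, M ∈ F V
            · obtain ⟨M, hM⟩ := hFe
              exact hmember_contra m V hVmem M hM (hVsub (hmemV M hM).1).1.le
                (hVsub (hmemV M hM).2.1).2.le
            · push_neg at hFe
              have hq2 : ∃ w ∈ V, w ≠ q := by
                by_contra hsing
                push_neg at hsing
                obtain ⟨l, hl, hIoc⟩ :=
                  exists_Ioc_subset_of_mem_nhds (hVopen.mem_nhds hqV) ⟨x, hqIoo.1⟩
                obtain ⟨w, hw⟩ := hDense (max l x) q (le_max_right l x)
                  (max_lt hl hqIoo.1) hqIoo.2.le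
                have hwV : w ∈ V := hIoc ⟨lt_of_le_of_lt (le_max_left l x) hw.1, hw.2.le⟩
                exact absurd (hsing w hwV) (ne_of_lt hw.2)
              obtain ⟨w', hw'V, hw'q⟩ := hq2
              have hpair : ∃ u v : K, u ∈ V ∧ v ∈ V ∧ u < v := by
                rcases hw'q.lt_or_gt with hlt | hlt
                exacts [⟨w', q, hw'V, hqV, hlt⟩, ⟨q, w', hqV, hw'V, hlt⟩]
              obtain ⟨u, v, hu, hv, huv⟩ := hpair
              obtain ⟨wm, hwm⟩ := hDense u v (hVsub hu).1.le huv (hVsub hv).2.le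
              have hwmV : wm ∈ V := hVoc.out hu hv ⟨hwm.1.le, hwm.2.le⟩
              have hmemF : (u, wm) ∈ F V :=
                hext V u wm hu hwmV hwm.1 (fun M hM => absurd hM (hFe M))
              exact hFe (u, wm) hmemF
      obtain ⟨z, hz⟩ := hIooxy
      obtain ⟨z', hz'⟩ := hDense x z le_rfl hz.1 hz.2.le
      have hzz' : d z' z = 0 := by
        by_contra hne0
        have hpos : 0 < d z' z := lt_of_le_of_ne (dpos z' z) (Ne.symm hne0)
        obtain ⟨m, hm⟩ := exists_nat_one_div_lt hpos
        have hlt := hlevel m z' ⟨hz'.1, lt_trans hz'.2 hz.2⟩ z hz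
        exact absurd hlt (not_lt.2 hm.le)
      exact absurd ((deq z' z).1 hzz') (ne_of_lt hz'.2)
  -- build the embedding
  refine ⟨↥ℋ, fun z γ => (γ : K → ℝ) z, ?_, ?_, ?_⟩
  · have hc : Continuous (fun z : K => fun γ : ↥ℋ => (γ : K → ℝ) z) :=
      continuous_pi (fun γ => hmem_cont γ.1 γ.2)
    have hinj : Function.Injective (fun z : K => fun γ : ↥ℋ => (γ : K → ℝ) z) := by
      intro a b hab
      by_contra hne
      rcases lt_or_gt_of_ne hne with h | h
      · obtain ⟨h₀, hh, hlt⟩ := hsep a b h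
        exact absurd (congrFun hab ⟨h₀, hh⟩) (ne_of_lt hlt)
      · obtain ⟨h₀, hh, hlt⟩ := hsep b a h
        exact absurd (congrFun hab ⟨h₀, hh⟩).symm (ne_of_lt hlt)
    exact (hc.isClosedEmbedding hinj).isEmbedding
  · intro z γ
    exact hmem_Icc γ.1 γ.2 z
  · intro x
    set T : ℕ → Set (K → ℝ) := fun m =>
      {h | ∃ u v : K, ∃ V ∈ 𝒞 m, (u, v) ∈ F V ∧ x ∈ Ioo u v ∧ h = hFn (u, v)} with hTdef
    have hTsub : ∀ m, (T m).Subsingleton := by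
      intro m h₁ hh₁ h₂ hh₂
      obtain ⟨u₁, v₁, V₁, hV₁, hM₁, hx₁, rfl⟩ := hh₁
      obtain ⟨u₂, v₂, V₂, hV₂, hM₂, hx₂, rfl⟩ := hh₂
      have hprops₁ := (hFmax V₁).1.1 _ hM₁
      have hprops₂ := (hFmax V₂).1.1 _ hM₂
      have hVoc₁ := ((h𝒞 m).1.1 V₁ hV₁).2.2.1
      have hVoc₂ := ((h𝒞 m).1.1 V₂ hV₂).2.2.1
      have hxV₁ : x ∈ V₁ := hVoc₁.out hprops₁.1 hprops₁.2.1 ⟨hx₁.1.le, hx₁.2.le⟩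
      have hxV₂ : x ∈ V₂ := hVoc₂.out hprops₂.1 hprops₂.2.1 ⟨hx₂.1.le, hx₂.2.le⟩
      have hVeq : V₁ = V₂ := by
        by_contra hne
        exact Set.disjoint_left.1 ((h𝒞 m).1.2 hV₁ hV₂ hne) hxV₁ hxV₂
      subst hVeq
      have hMeq : (u₁, v₁) = (u₂, v₂) := by
        by_contra hne
        exact Set.disjoint_left.1 ((hFmax V₁).1.2 hM₁ hM₂ hne)
          ⟨hx₁.1, hx₁.2.le⟩ ⟨hx₂.1, hx₂.2.le⟩
      rw [hMeq]
    have hcnt : (⋃ m, T m).Countable := countable_iUnion (fun m => (hTsub m).countable)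
    refine (hcnt.preimage (Subtype.val_injective)).mono ?_
    intro γ hγ
    obtain ⟨u, v, huv, hγeq, horig⟩ := γ.2
    have hs := hFnSpec (u, v) huv
    have hγx : (γ : K → ℝ) x ∉ ({0, 1} : Set ℝ) := hγ
    have hxIoo : x ∈ Ioo u v := by
      constructor
      · by_contra hnx
        push_neg at hnx
        have hval : (γ : K → ℝ) x = 0 := by rw [hγeq]; exact hs.2.2.2.1 x hnx
        exact hγx (by rw [hval]; exact Or.inl rfl)
      · by_contra hnx
        push_neg at hnx
        have hval : (γ : K → ℝ) x = 1 := by rw [hγeq]; exact hs.2.2.2.2 x hnx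
        exact hγx (by rw [hval]; exact Or.inr rfl)
    rcases horig with hemp | ⟨m, V, hV, hMF⟩
    · rw [hemp] at hxIoo
      exact absurd hxIoo (notMem_empty x)
    · refine mem_preimage.2 (mem_iUnion.2 ⟨m, ?_⟩)
      exact ⟨u, v, V, hV, hMF, hxIoo, hγeq⟩
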